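/- arXiv:1512.04734 — 2 statements merged into one kernel-verified Lean document; each statement's English description precedes it below -/
import Mathlib

section
/- For any n×p real matrix A and any q ∈ [1, ∞], the matrix A·Aᵀ satisfies ‖A Aᵀ‖_{q,q} ≤ ‖A‖_{2,q}², where ‖M‖_{q₁,q₂} = (∑ᵢ ‖Mᵢ,•‖_{q₁}^{q₂})^{1/q₂} is the mixed norm with rows measured in ℓ_{q₁} and aggregated in ℓ_{q₂}. -/
open scoped ENNReal Matrix

/-- Mixed norm `‖M‖_{q₁,q₂}`: each row is measured in the `ℓ_{q₁}` norm, and the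
resulting vector of row norms is aggregated in the `ℓ_{q₂}` norm
(with the usual sup convention for `q = ∞`). -/
noncomputable def mixedNorm (q₁ q₂ : ℝ≥0∞) [Fact (1 ≤ q₁)] [Fact (1 ≤ q₂)]
    {n p : ℕ} (M : Matrix (Fin n) (Fin p) ℝ) : ℝ :=
  ‖(WithLp.equiv q₂ (Fin n → ℝ)).symm
      (fun i => ‖(WithLp.equiv q₁ (Fin p → ℝ)).symm (M i)‖)‖

lemma pilp_norm_mono {q : ℝ≥0∞} [Fact (1 ≤ q)] {n : ℕ} {f g : Fin n → ℝ}
    (h : ∀ i, |f i| ≤ g i) :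
    ‖(WithLp.equiv q (Fin n → ℝ)).symm f‖ ≤ ‖(WithLp.equiv q (Fin n → ℝ)).symm g‖ := by
  have hg : ∀ i, ‖f i‖ ≤ ‖g i‖ := fun i => by
    rw [Real.norm_eq_abs, Real.norm_eq_abs, abs_of_nonneg ((abs_nonneg _).trans (h i))]
    exact h i
  rcases eq_or_ne q ∞ with hq | hq
  · subst hq
    rw [WithLp.equiv_symm_apply, PiLp.norm_toLp, PiLp.norm_toLp]
    refine (pi_norm_le_iff_of_nonneg (norm_nonneg _)).mpr fun i => ?_
    exact (hg i).trans (norm_le_pi_norm (g : Fin n → ℝ) i)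
  · have hp : 0 < q.toReal := ENNReal.toReal_pos (by
      intro h0; exact absurd (h0 ▸ (Fact.out : (1:ℝ≥0∞) ≤ q)) (by simp)) hq
    rw [PiLp.norm_eq_sum hp, PiLp.norm_eq_sum hp]
    refine Real.rpow_le_rpow (Finset.sum_nonneg fun i _ => Real.rpow_nonneg (norm_nonneg _) _)
      (Finset.sum_le_sum fun i _ => Real.rpow_le_rpow (norm_nonneg _) (hg i) hp.le)
      (by positivity)

theorem stmt2 (n p : ℕ) (q : ℝ≥0∞) [Fact (1 ≤ q)] (A : Matrix (Fin n) (Fin p) ℝ) :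
    mixedNorm q q (A * Aᵀ) ≤ (mixedNorm 2 q A) ^ 2 := by
  set r : Fin n → ℝ := fun i => ‖(WithLp.equiv 2 (Fin p → ℝ)).symm (A i)‖ with hr
  set N : ℝ := mixedNorm 2 q A with hN
  have hNdef : N = ‖(WithLp.equiv q (Fin n → ℝ)).symm r‖ := rfl
  have hN0 : 0 ≤ N := hNdef ▸ norm_nonneg _
  have entry : ∀ i j, |(A * Aᵀ) i j| ≤ r i * r j := by
    intro i j
    have h := abs_real_inner_le_norm ((WithLp.equiv 2 (Fin p → ℝ)).symm (A i))
      ((WithLp.equiv 2 (Fin p → ℝ)).symm (A j))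
    simpa [Matrix.mul_apply, Matrix.transpose_apply, PiLp.inner_apply, RCLike.inner_apply,
      conj_trivial, hr, mul_comm] using h
  have row : ∀ i, ‖(WithLp.equiv q (Fin n → ℝ)).symm ((A * Aᵀ) i)‖ ≤ r i * N := by
    intro i
    calc ‖(WithLp.equiv q (Fin n → ℝ)).symm ((A * Aᵀ) i)‖
        ≤ ‖(WithLp.equiv q (Fin n → ℝ)).symm (fun j => r i * r j)‖ :=
          pilp_norm_mono fun j => entry i j
      _ = r i * N := by
          have : (fun j => r i * r j) = r i • r := by ext j; simp [Pi.smul_apply, smul_eq_mul]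
          rw [this, (show (WithLp.equiv q (Fin n → ℝ)).symm (r i • r) = r i • (WithLp.equiv q (Fin n → ℝ)).symm r from WithLp.toLp_smul q (r i) r), norm_smul, Real.norm_eq_abs,
            abs_of_nonneg (norm_nonneg _), ← hNdef]
  calc mixedNorm q q (A * Aᵀ)
      ≤ ‖(WithLp.equiv q (Fin n → ℝ)).symm (fun i => r i * N)‖ := by
        refine pilp_norm_mono fun i => ?_
        rw [abs_of_nonneg (norm_nonneg _)]
        exact row i
    _ = N ^ 2 := by
        have : (fun i => r i * N) = N • r := by ext i; simp [Pi.smul_apply, smul_eq_mul, mul_comm]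
        rw [this, (show (WithLp.equiv q (Fin n → ℝ)).symm (N • r) = N • (WithLp.equiv q (Fin n → ℝ)).symm r from WithLp.toLp_smul q N r), norm_smul, Real.norm_eq_abs, abs_of_nonneg hN0,
          ← hNdef, sq]
end

section
/- Let P be an n×n orthogonal projection matrix and Δ an n×p real matrix. Then ‖PΔ‖_F² ≤ ‖P‖_{∞,∞} · ‖Δ‖_{2,1}², where ‖Δ‖_{2,1} = ∑ᵢ ‖Δᵢ,•‖₂ and ‖P‖_{∞,∞} = maxᵢⱼ|Pᵢⱼ|. -/
open scoped Matrix

theorem stmt5 (n p : ℕ) (P : Matrix (Fin n) (Fin n) ℝ)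
    (hsym : Pᵀ = P) (hidem : P * P = P) (Δ : Matrix (Fin n) (Fin p) ℝ) :
    ∑ i, ∑ j, ((P * Δ) i j) ^ 2 ≤
      (⨆ i, ⨆ j, |P i j|) * (∑ i, Real.sqrt (∑ j, (Δ i j) ^ 2)) ^ 2 := by
  set M := ⨆ i, ⨆ j, |P i j| with hMdef
  set a : Fin n → ℝ := fun k => Real.sqrt (∑ j, (Δ k j) ^ 2) with hadef
  have hs : ∀ i k : Fin n, P i k = P k i := fun i k =>
    (congrFun (congrFun hsym i) k).symm
  have hP : ∀ k l : Fin n, ∑ i, P i k * P i l = P k l := by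
    intro k l
    have h := congrFun (congrFun hidem k) l
    rw [Matrix.mul_apply] at h
    calc ∑ i, P i k * P i l = ∑ i, P k i * P i l :=
          Finset.sum_congr rfl fun i _ => by rw [hs i k]
      _ = P k l := h
  -- key algebraic identity
  have key : ∑ i, ∑ j, ((P * Δ) i j) ^ 2
      = ∑ k, ∑ l, P k l * ∑ j, Δ k j * Δ l j := by
    have rhs_eq : ∑ k, ∑ l, P k l * ∑ j, Δ k j * Δ l j
        = ∑ k, ∑ l, ∑ i, ∑ j, (P i k * Δ k j) * (P i l * Δ l j) := by
      refine Finset.sum_congr rfl fun k _ => Finset.sum_congr rfl fun l _ => ?_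
      rw [← hP k l, Finset.sum_mul]
      refine Finset.sum_congr rfl fun i _ => ?_
      rw [Finset.mul_sum]
      exact Finset.sum_congr rfl fun j _ => by ring
    rw [rhs_eq]
    calc ∑ i, ∑ j, ((P * Δ) i j) ^ 2
        = ∑ i, ∑ j, ∑ k, ∑ l, (P i k * Δ k j) * (P i l * Δ l j) := by
          refine Finset.sum_congr rfl fun i _ => Finset.sum_congr rfl fun j _ => ?_
          rw [Matrix.mul_apply, sq, Finset.sum_mul_sum]
      _ = ∑ i, ∑ k, ∑ j, ∑ l, (P i k * Δ k j) * (P i l * Δ l j) :=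
          Finset.sum_congr rfl fun i _ => Finset.sum_comm
      _ = ∑ k, ∑ i, ∑ j, ∑ l, (P i k * Δ k j) * (P i l * Δ l j) :=
          Finset.sum_comm
      _ = ∑ k, ∑ i, ∑ l, ∑ j, (P i k * Δ k j) * (P i l * Δ l j) :=
          Finset.sum_congr rfl fun k _ => Finset.sum_congr rfl fun i _ =>
            Finset.sum_comm
      _ = ∑ k, ∑ l, ∑ i, ∑ j, (P i k * Δ k j) * (P i l * Δ l j) :=
          Finset.sum_congr rfl fun k _ => Finset.sum_comm
  -- bound on entries of P
  have hbdd : ∀ i : Fin n, BddAbove (Set.range fun j => |P i j|) := fun i =>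
    (Set.finite_range _).bddAbove
  have hbdd2 : BddAbove (Set.range fun i => ⨆ j, |P i j|) :=
    (Set.finite_range _).bddAbove
  have hM : ∀ k l : Fin n, |P k l| ≤ M := by
    intro k l
    calc |P k l| ≤ ⨆ j, |P k j| := le_ciSup (hbdd k) l
      _ ≤ M := le_ciSup hbdd2 k
  have hMnonneg : ∀ k : Fin n, (0 : ℝ) ≤ M := fun k =>
    (abs_nonneg _).trans (hM k k)
  have ha_nonneg : ∀ k, 0 ≤ a k := fun k => Real.sqrt_nonneg _
  -- Cauchy-Schwarz
  have hCS : ∀ k l : Fin n, |∑ j, Δ k j * Δ l j| ≤ a k * a l := by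
    intro k l
    have h := Finset.sum_mul_sq_le_sq_mul_sq Finset.univ (fun j => Δ k j) (fun j => Δ l j)
    calc |∑ j, Δ k j * Δ l j| = Real.sqrt ((∑ j, Δ k j * Δ l j) ^ 2) :=
          (Real.sqrt_sq_eq_abs _).symm
      _ ≤ Real.sqrt ((∑ j, (Δ k j) ^ 2) * ∑ j, (Δ l j) ^ 2) := Real.sqrt_le_sqrt h
      _ = a k * a l := Real.sqrt_mul (Finset.sum_nonneg fun j _ => sq_nonneg _) _
  rw [key]
  have expand : (∑ i, a i) ^ 2 = ∑ k, ∑ l, a k * a l := by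
    rw [sq, Finset.sum_mul_sum]
  rw [expand, Finset.mul_sum]
  refine Finset.sum_le_sum fun k _ => ?_
  rw [Finset.mul_sum]
  refine Finset.sum_le_sum fun l _ => ?_
  calc P k l * ∑ j, Δ k j * Δ l j ≤ |P k l * ∑ j, Δ k j * Δ l j| := le_abs_self _
    _ = |P k l| * |∑ j, Δ k j * Δ l j| := abs_mul _ _
    _ ≤ M * (a k * a l) :=
        mul_le_mul (hM k l) (hCS k l) (abs_nonneg _) (hMnonneg k)
end
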